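/- (Theorem 1, upper bound, low-loss regime.) For every γ ∈ (1/√2, 1] and every γ-admissible triple (Π₀,Π₁,Π_∅), the guessing value satisfies V = (1/2)·Tr[ρ₀Π₀ + ρ₁Π₁] ≤ (2γ² + 1/√2)/4. -/

import Mathlib

open Matrix Complex Kronecker BigOperators ComplexOrder

noncomputable section

abbrev Mat2 := Matrix (Fin 2) (Fin 2) ℂ
abbrev Mat4 := Matrix (Fin 2 × Fin 2) (Fin 2 × Fin 2) ℂ

/-- Pauli X matrix -/
def PX : Mat2 := !![0, 1; 1, 0]

/-- Pauli Y matrix -/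
def PY : Mat2 := !![0, -Complex.I; Complex.I, 0]

/-- sign (−1)^b for a bit b -/
def bsign (b : Bool) : ℂ := if b then -1 else 1

/-- boolean function f(x̄,ȳ) = (x₁·y₁) XOR x₂ XOR y₂ -/
def fxy (x y : Bool × Bool) : Bool := (((x.1 && y.1)).xor x.2).xor y.2

/-- qubit input states ω_{x̄}: ω_{(0,x₂)} = (I+(−1)^{x₂}X)/2, ω_{(1,x₂)} = (I+(−1)^{x₂}Y)/2 -/
def omg (x : Bool × Bool) : Mat2 :=
  (1/2 : ℂ) • ((1 : Mat2) + bsign x.2 • (if x.1 then PY else PX))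

/-- qubit input states τ_{ȳ} = (I+(−1)^{y₂}(X+(−1)^{y₁}Y)/√2)/2 -/
def tau (y : Bool × Bool) : Mat2 :=
  (1/2 : ℂ) • ((1 : Mat2) + (bsign y.2 / (Real.sqrt 2 : ℂ)) • (PX + bsign y.1 • PY))

/-- averaged input states ρ₀ (for c = false) and ρ₁ (for c = true) -/
def rho (c : Bool) : Mat4 :=
  (1/8 : ℂ) • ∑ x : Bool × Bool, ∑ y : Bool × Bool,
    (if fxy x y = c then omg x ⊗ₖ tau y else 0)

/-- standard basis vectors of ℂ⁴ ≅ ℂ² ⊗ ℂ² -/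
def ket (i j : Fin 2) : (Fin 2 × Fin 2) → ℂ := fun p => if p = (i, j) then 1 else 0

def PhiP : (Fin 2 × Fin 2) → ℂ := fun p => (1 / (Real.sqrt 2 : ℂ)) * (ket 0 0 p + ket 1 1 p)
def PhiM : (Fin 2 × Fin 2) → ℂ := fun p => (1 / (Real.sqrt 2 : ℂ)) * (ket 0 0 p - ket 1 1 p)
def PsiP : (Fin 2 × Fin 2) → ℂ := fun p => (1 / (Real.sqrt 2 : ℂ)) * (ket 0 1 p + ket 1 0 p)
def PsiM : (Fin 2 × Fin 2) → ℂ := fun p => (1 / (Real.sqrt 2 : ℂ)) * (ket 0 1 p - ket 1 0 p)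

/-- rank one projector |v⟩⟨v| -/
def proj (v : (Fin 2 × Fin 2) → ℂ) : Mat4 := Matrix.vecMulVec v (star v)

/-- a γ-admissible measurement triple -/
def Admissible (γ : ℝ) (P0 P1 Pe : Mat4) : Prop :=
  P0.PosSemidef ∧ P1.PosSemidef ∧ Pe.PosSemidef ∧
  P0 + P1 + Pe = 1 ∧
  ∀ x y : Bool × Bool, ((omg x ⊗ₖ tau y) * Pe).trace = 1 - (γ : ℂ)^2

/-- guessing value V = (1/2)·Tr[ρ₀Π₀ + ρ₁Π₁] (a real number) -/
def Gval (P0 P1 : Mat4) : ℝ := (1/2) * ((rho false * P0 + rho true * P1).trace).re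

/- ### Auxiliary lemmas -/

lemma sqrt2_sq : ((Real.sqrt 2 : ℝ) : ℂ) * ((Real.sqrt 2 : ℝ) : ℂ) = 2 := by
  rw [← Complex.ofReal_mul, Real.mul_self_sqrt (by norm_num : (0:ℝ) ≤ 2)]
  norm_num

lemma sqrt2_inv_sq : ((Real.sqrt 2 : ℝ) : ℂ)⁻¹ * ((Real.sqrt 2 : ℝ) : ℂ)⁻¹ = 1/2 := by
  rw [← mul_inv, sqrt2_sq]; norm_num

lemma omg_tau_sum : (∑ x : Bool × Bool, ∑ y : Bool × Bool, omg x ⊗ₖ tau y) = (4:ℂ) • 1 := by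
  simp only [Fintype.sum_prod_type, Fintype.sum_bool, omg, tau, bsign]
  simp only [Matrix.smul_kronecker, Matrix.kronecker_smul,
    Matrix.add_kronecker, Matrix.kronecker_add, Matrix.one_kronecker_one,
    Bool.false_eq_true, Bool.true_eq_false, if_true, if_false, reduceIte]
  module

lemma rho_add : rho false + rho true = (1/2 : ℂ) • 1 := by
  have h : rho false + rho true
      = (1/8 : ℂ) • ∑ x : Bool × Bool, ∑ y : Bool × Bool, omg x ⊗ₖ tau y := by
    simp only [rho, ← smul_add, ← Finset.sum_add_distrib]
    congr 1
    refine Finset.sum_congr rfl fun x _ => Finset.sum_congr rfl fun y _ => ?_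
    rcases hf : fxy x y <;> simp [hf]
  rw [h, omg_tau_sum, smul_smul]
  norm_num

lemma rho_diff : rho false - rho true
    = (1/(4*(Real.sqrt 2 : ℂ))) • (PX ⊗ₖ PX + PY ⊗ₖ PY) := by
  simp only [rho, fxy, Fintype.sum_prod_type, Fintype.sum_bool]
  norm_num
  simp only [omg, tau, bsign, Matrix.smul_kronecker, Matrix.kronecker_smul,
    Matrix.add_kronecker, Matrix.kronecker_add, Matrix.one_kronecker_one,
    Bool.false_eq_true, Bool.true_eq_false, if_true, if_false, reduceIte]
  module

lemma XX_YY : PX ⊗ₖ PX + PY ⊗ₖ PY = (2:ℂ) • (proj PsiP - proj PsiM) := by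
  ext ⟨i,j⟩ ⟨k,l⟩
  fin_cases i <;> fin_cases j <;> fin_cases k <;> fin_cases l <;>
    simp [PX, PY, PsiP, PsiM, proj, ket, vecMulVec_apply, kroneckerMap_apply,
      Prod.ext_iff, map_inv₀, Complex.conj_ofReal] <;>
    field_simp <;> ring_nf <;>
    simp [pow_two, ← mul_inv, sqrt2_sq, sqrt2_inv_sq] <;> ring_nf

lemma rho_diff' : rho false - rho true
    = (1/(2*(Real.sqrt 2 : ℂ))) • (proj PsiP - proj PsiM) := by
  rw [rho_diff, XX_YY, smul_smul]
  congr 1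
  have h0 : ((Real.sqrt 2 : ℝ) : ℂ) ≠ 0 := by
    simpa using Real.sqrt_ne_zero'.mpr (by norm_num : (0:ℝ) < 2)
  field_simp
  ring

lemma trace_proj_mul (v : (Fin 2 × Fin 2) → ℂ) (P : Mat4) :
    (proj v * P).trace = star v ⬝ᵥ (P *ᵥ v) := by
  simp only [proj, trace, diag, mul_apply, vecMulVec_apply, dotProduct, mulVec,
    Pi.star_apply]
  rw [Finset.sum_comm]
  simp only [Finset.mul_sum, Finset.sum_mul]
  exact Finset.sum_congr rfl fun j _ => Finset.sum_congr rfl fun i _ => by ring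

lemma normPsiP : star PsiP ⬝ᵥ PsiP = 1 := by
  simp [PsiP, ket, dotProduct, Fintype.sum_prod_type, Fin.sum_univ_two, Prod.ext_iff,
    map_inv₀, Complex.conj_ofReal, sqrt2_inv_sq]
  norm_num

lemma normPsiM : star PsiM ⬝ᵥ PsiM = 1 := by
  simp [PsiM, ket, dotProduct, Fintype.sum_prod_type, Fin.sum_univ_two, Prod.ext_iff,
    map_inv₀, Complex.conj_ofReal, sqrt2_inv_sq]
  norm_num

/-- upper bound, low-loss regime: for γ ∈ (1/√2, 1] and any γ-admissible
triple, V ≤ (2γ² + 1/√2)/4. -/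
theorem guessing_upper_bound_low_loss (γ : ℝ) (hγ : 1/Real.sqrt 2 < γ) (hγ' : γ ≤ 1)
    (P0 P1 Pe : Mat4) (h : Admissible γ P0 P1 Pe) :
    Gval P0 P1 ≤ (2*γ^2 + 1/Real.sqrt 2)/4 := by
  obtain ⟨h0, h1, he, hres, hcon⟩ := h
  -- trace of Pe
  have hTrPe : Pe.trace = 4 * (1 - (γ:ℂ)^2) := by
    have e1 : ((∑ x : Bool × Bool, ∑ y : Bool × Bool, omg x ⊗ₖ tau y) * Pe).trace
        = 16 * (1 - (γ:ℂ)^2) := by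
      rw [Finset.sum_mul, trace_sum]
      rw [Finset.sum_congr rfl fun x _ => (by rw [Finset.sum_mul, trace_sum] :
        ((∑ y : Bool × Bool, omg x ⊗ₖ tau y) * Pe).trace
          = ∑ y : Bool × Bool, ((omg x ⊗ₖ tau y) * Pe).trace)]
      simp [hcon]
      ring
    rw [omg_tau_sum, Matrix.smul_mul, Matrix.one_mul, trace_smul, smul_eq_mul] at e1
    linear_combination (1/4 : ℂ) * e1
  -- trace of P0 + P1
  have hT01 : P0.trace + P1.trace = 4 * (γ:ℂ)^2 := by
    have e2 := congrArg Matrix.trace hres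
    simp only [trace_add, Matrix.trace_one] at e2
    have hcard : (Fintype.card (Fin 2 × Fin 2) : ℂ) = 4 := by simp
    rw [hcard] at e2
    linear_combination e2 - hTrPe
  -- the four overlap quantities
  set vP := PsiP
  set vM := PsiM
  set a := star vP ⬝ᵥ (P0 *ᵥ vP) with ha
  set b := star vM ⬝ᵥ (P0 *ᵥ vM) with hb
  set c := star vP ⬝ᵥ (P1 *ᵥ vP) with hc
  set d := star vM ⬝ᵥ (P1 *ᵥ vM) with hd
  -- bounds on overlaps
  have hbound : ∀ (P Q R : Mat4), P.PosSemidef → Q.PosSemidef → R.PosSemidef →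
      P + Q + R = 1 → ∀ v : (Fin 2 × Fin 2) → ℂ, star v ⬝ᵥ v = 1 →
      0 ≤ star v ⬝ᵥ (P *ᵥ v) ∧ star v ⬝ᵥ (P *ᵥ v) ≤ 1 := by
    intro P Q R hP hQ hR hPQR v hv
    refine ⟨hP.dotProduct_mulVec_nonneg v, ?_⟩
    have hQR : (Q + R).PosSemidef := hQ.add hR
    have h1P : (1 : Mat4) - P = Q + R := by rw [← hPQR]; abel
    have := hQR.dotProduct_mulVec_nonneg v
    rw [← h1P, Matrix.sub_mulVec, dotProduct_sub, Matrix.one_mulVec, hv] at this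
    exact sub_nonneg.mp this
  have hbA := hbound P0 P1 Pe h0 h1 he hres vP normPsiP
  have hbB := hbound P0 P1 Pe h0 h1 he hres vM normPsiM
  have hresC : P1 + P0 + Pe = 1 := by rw [← hres]; abel
  have hbC := hbound P1 P0 Pe h1 h0 he hresC vP normPsiP
  have hbD := hbound P1 P0 Pe h1 h0 he hresC vM normPsiM
  -- main trace identity
  have e0 : rho false = (1/2:ℂ) • ((1/2:ℂ) • (1:Mat4))
      + (1/2:ℂ) • ((1/(2*(Real.sqrt 2 : ℂ))) • (proj PsiP - proj PsiM)) := by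
    rw [← rho_add, ← rho_diff']; module
  have e1' : rho true = (1/2:ℂ) • ((1/2:ℂ) • (1:Mat4))
      - (1/2:ℂ) • ((1/(2*(Real.sqrt 2 : ℂ))) • (proj PsiP - proj PsiM)) := by
    rw [← rho_add, ← rho_diff']; module
  have hT : (rho false * P0 + rho true * P1).trace
      = (γ:ℂ)^2 + (1/(4*(Real.sqrt 2 : ℂ))) * (a - b - c + d) := by
    rw [e0, e1']
    simp only [Matrix.add_mul, Matrix.sub_mul, Matrix.smul_mul, Matrix.one_mul,
      trace_add, trace_sub, trace_smul, smul_eq_mul, trace_proj_mul]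
    rw [ha, hb, hc, hd]
    linear_combination (1/4 : ℂ) * hT01
  -- take real parts
  have hcoef : (1/(4*(Real.sqrt 2 : ℂ))) = ((1/(4*Real.sqrt 2) : ℝ) : ℂ) := by push_cast; ring
  have hg2 : ((γ:ℂ)^2) = (((γ^2 : ℝ)) : ℂ) := by push_cast; ring
  have hTre : ((rho false * P0 + rho true * P1).trace).re
      = γ^2 + (1/(4*Real.sqrt 2)) * (a.re - b.re - c.re + d.re) := by
    rw [hT, hcoef, hg2]
    rw [Complex.add_re, Complex.ofReal_re, Complex.re_ofReal_mul]
    simp only [Complex.sub_re, Complex.add_re]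
  -- real bounds
  have hare : a.re ≤ 1 := by
    have := (Complex.le_def.mp hbA.2).1; simpa using this
  have hdre : d.re ≤ 1 := by
    have := (Complex.le_def.mp hbD.2).1; simpa using this
  have hbre : 0 ≤ b.re := by
    have := (Complex.le_def.mp hbB.1).1; simpa using this
  have hcre : 0 ≤ c.re := by
    have := (Complex.le_def.mp hbC.1).1; simpa using this
  have hE : a.re - b.re - c.re + d.re ≤ 2 := by linarith
  -- final arithmetic
  have hs : (0:ℝ) < Real.sqrt 2 := Real.sqrt_pos.mpr (by norm_num)
  have hpos : (0:ℝ) < 1/(4*Real.sqrt 2) := by positivity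
  rw [Gval, hTre]
  have hmul : (1/(4*Real.sqrt 2)) * (a.re - b.re - c.re + d.re)
      ≤ (1/(4*Real.sqrt 2)) * 2 := by
    exact mul_le_mul_of_nonneg_left hE (le_of_lt hpos)
  have hrhs : (2*γ^2 + 1/Real.sqrt 2)/4 = γ^2/2 + (1/2) * ((1/(4*Real.sqrt 2)) * 2) := by
    field_simp
    ring
  rw [hrhs]
  nlinarith [hmul]
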